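/- Let D be a finite directed bipartite-like graph on vertex set V_H ∪ V_P in which there are no arcs between two vertices of V_P. Define D' on vertex set V_H with arcs: all arcs of D between vertices of V_H, plus an arc (h, h') whenever D has arcs (h, p) and (p, h') for some p ∈ V_P. Then a subset X ⊆ V_H is a feedback vertex set of D' if and only if it is a feedback vertex set of D. -/

import Mathlib

/-- `X` is a feedback vertex set of the digraph with arc relation `A`: removing `X` leaves
no directed cycle. -/
def FVS {V : Type*} (A : V → V → Prop) (X : Set V) : Prop :=
  ∀ v ∉ X, ¬ Relation.TransGen (fun u w => A u w ∧ u ∉ X ∧ w ∉ X) v v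

/-- Let `D` have vertex partition `V_H ∪ V_P` (`V_P = P`, `V_H = Pᶜ`) with no
arcs inside `V_P`. Let `D'` on `V_H` have the arcs of `D` between `V_H`-vertices plus an
arc `(h, h')` whenever `D` has arcs `(h, p)` and `(p, h')` with `p ∈ V_P`. Then a subset
`X ⊆ V_H` is a feedback vertex set of `D'` iff it is one of `D`. -/
theorem fvs_reduced_iff {V : Type*} [Fintype V] (A : V → V → Prop) (P : Set V)
    (hP : ∀ u v, A u v → u ∉ P ∨ v ∉ P)
    (A' : V → V → Prop)
    (hA' : ∀ h h', A' h h' ↔ (h ∉ P ∧ h' ∉ P ∧ (A h h' ∨ ∃ p ∈ P, A h p ∧ A p h')))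
    (X : Set V) (hX : X ⊆ Pᶜ) :
    FVS A' X ↔ FVS A X := by
  have hPX : ∀ p ∈ P, p ∉ X := fun p hp hx => hX hx hp
  set B : V → V → Prop := fun u w => A u w ∧ u ∉ X ∧ w ∉ X with hBdef
  set B' : V → V → Prop := fun u w => A' u w ∧ u ∉ X ∧ w ∉ X with hB'def
  -- key claim: translate B-paths starting outside P to B'-paths
  have key : ∀ u w, u ∉ P → Relation.TransGen B u w →
      (w ∉ P → Relation.TransGen B' u w) ∧
      (w ∈ P → ∃ h', h' ∉ P ∧ h' ∉ X ∧ A h' w ∧ Relation.ReflTransGen B' u h') := by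
    intro u w hu ht
    induction ht with
    | single hstep =>
      obtain ⟨hA, huX, hwX⟩ := hstep
      constructor
      · intro hw
        exact Relation.TransGen.single ⟨(hA' u _).2 ⟨hu, hw, Or.inl hA⟩, huX, hwX⟩
      · intro _
        exact ⟨u, hu, huX, hA, Relation.ReflTransGen.refl⟩
    | @tail x w ht hstep ih =>
      obtain ⟨hAxw, hxX, hwX⟩ := hstep
      by_cases hx : x ∈ P
      · -- x ∈ P : use IH second part
        obtain ⟨h', hh'P, hh'X, hAh'x, hrt⟩ := (ih).2 hx
        have hwP : w ∉ P := by
          rcases hP x w hAxw with h | h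
          · exact absurd hx h
          · exact h
        refine ⟨fun _ => ?_, fun hw => absurd hw hwP⟩
        have hstep' : B' h' w :=
          ⟨(hA' h' w).2 ⟨hh'P, hwP, Or.inr ⟨x, hx, hAh'x, hAxw⟩⟩, hh'X, hwX⟩
        exact Relation.TransGen.tail' hrt hstep'
      · -- x ∉ P : use IH first part
        have htg : Relation.TransGen B' u x := (ih).1 hx
        constructor
        · intro hw
          exact htg.tail ⟨(hA' x w).2 ⟨hx, hw, Or.inl hAxw⟩, hxX, hwX⟩
        · intro _
          exact ⟨x, hx, hxX, hAxw, htg.to_reflTransGen⟩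
  -- B'-steps give B-paths
  have back : ∀ u w, B' u w → Relation.TransGen B u w := by
    intro u w ⟨hA, huX, hwX⟩
    obtain ⟨huP, hwP, hA | ⟨p, hp, hup, hpw⟩⟩ := (hA' u w).1 hA
    · exact Relation.TransGen.single ⟨hA, huX, hwX⟩
    · have hpX := hPX p hp
      exact Relation.TransGen.head ⟨hup, huX, hpX⟩ (Relation.TransGen.single ⟨hpw, hpX, hwX⟩)
  constructor
  · -- FVS A' X → FVS A X
    intro hF v hv hcyc
    by_cases hvP : v ∈ P
    · -- decompose: first step leaves P
      obtain ⟨x, hstep, hrest⟩ := Relation.TransGen.head'_iff.1 hcyc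
      obtain ⟨hAvx, hvX, hxX⟩ := hstep
      have hxP : x ∉ P := by
        rcases hP v x hAvx with h | h
        · exact absurd hvP h
        · exact h
      have hne : x ≠ v := by rintro rfl; exact hxP hvP
      have htg : Relation.TransGen B x v :=
        (Relation.reflTransGen_iff_eq_or_transGen.1 hrest).resolve_left (fun h => hne h.symm)
      obtain ⟨h', hh'P, hh'X, hAh'v, hrt⟩ := (key x v hxP htg).2 hvP
      have hstep' : B' h' x :=
        ⟨(hA' h' x).2 ⟨hh'P, hxP, Or.inr ⟨v, hvP, hAh'v, hAvx⟩⟩, hh'X, hxX⟩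
      exact hF x hxX (Relation.TransGen.tail' hrt hstep')
    · exact hF v hv ((key v v hvP hcyc).1 hvP)
  · -- FVS A X → FVS A' X
    intro hF v hv hcyc
    have : Relation.TransGen B v v := by
      have := Relation.TransGen.mono (r := B') (p := Relation.TransGen B) back v v hcyc
      rwa [Relation.transGen_idem] at this
    exact hF v hv this
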